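/- Every second-countable regular topological space Y embedded in a second-countable regular space X is regularly embedded: there exists an operator e from open sets of Y to open sets of X such that e(U) ∩ Y = U for all open U ⊆ Y and e(U) ∩ e(V) = ∅ whenever U ∩ V = ∅. -/

import Mathlib

open EMetric Set

/-- Every subspace `Y` of a second-countable regular space `X` is
regularly embedded: there is an operator `e` from opens of `Y` to opens of `X`
with `e(U) ∩ Y = U` and `e(U) ∩ e(V) = ∅` for disjoint open `U, V`. -/
theorem regularly_embedded_of_secondCountable_regular
    {X : Type*} [TopologicalSpace X] [SecondCountableTopology X] [RegularSpace X]
    (Y : Set X) :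
    ∃ e : Set Y → Set X,
      (∀ U : Set Y, IsOpen U → IsOpen (e U)) ∧
      (∀ U : Set Y, IsOpen U → (Subtype.val ⁻¹' (e U) : Set Y) = U) ∧
      (∀ U V : Set Y, IsOpen U → IsOpen V → U ∩ V = ∅ → e U ∩ e V = ∅) := by
  letI : PseudoMetricSpace X := TopologicalSpace.pseudoMetrizableSpacePseudoMetric X
  refine ⟨fun U => {x | infEdist x (Subtype.val '' U) < infEdist x (Y \ Subtype.val '' U)},
    ?_, ?_, ?_⟩
  · intro U _
    exact isOpen_lt continuous_infEdist continuous_infEdist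
  · intro U hU
    ext y
    simp only [mem_preimage, mem_setOf_eq]
    constructor
    · intro hy
      by_contra hyU
      have h1 : infEdist (y : X) (Y \ Subtype.val '' U) = 0 := by
        apply infEdist_zero_of_mem
        exact ⟨y.2, fun ⟨z, hz, hzy⟩ => hyU (by rwa [← Subtype.ext hzy.symm] at hz)⟩
      rw [h1] at hy
      exact absurd hy (by simp)
    · intro hy
      have h0 : infEdist (y : X) (Subtype.val '' U) = 0 :=
        infEdist_zero_of_mem ⟨y, hy, rfl⟩
      rw [h0]
      -- need infEdist y (Y \ U) > 0
      obtain ⟨W, hWo, hyW, hWU⟩ : ∃ W : Set X, IsOpen W ∧ (y : X) ∈ W ∧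
          W ∩ Y ⊆ Subtype.val '' U := by
        rw [isOpen_induced_iff] at hU
        obtain ⟨W, hWo, hWU⟩ := hU
        refine ⟨W, hWo, by rw [← hWU] at hy; exact hy, ?_⟩
        rintro x ⟨hxW, hxY⟩
        exact ⟨⟨x, hxY⟩, by rw [← hWU]; exact hxW, rfl⟩
      rw [pos_iff_ne_zero, Ne]
      change ¬ Metric.infEDist (y : X) (Y \ Subtype.val '' U) = 0
      rw [← mem_closure_iff_infEdist_zero]
      intro hcl
      have : closure (Y \ Subtype.val '' U) ⊆ Wᶜ := by
        apply closure_minimal _ hWo.isClosed_compl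
        rintro x ⟨hxY, hxU⟩ hxW
        exact hxU (hWU ⟨hxW, hxY⟩)
      exact this hcl hyW
  · intro U V hU hV hUV
    ext x
    simp only [mem_inter_iff, mem_setOf_eq, mem_empty_iff_false, iff_false, not_and]
    intro hxU hxV
    have h1 : infEdist x (Y \ Subtype.val '' U) ≤ infEdist x (Subtype.val '' V) := by
      apply infEdist_anti
      rintro z ⟨w, hwV, rfl⟩
      refine ⟨w.2, fun ⟨u, huU, hu⟩ => ?_⟩
      have : w ∈ U ∩ V := ⟨by rwa [Subtype.ext hu] at huU, hwV⟩
      rw [hUV] at this; exact this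
    have h2 : infEdist x (Y \ Subtype.val '' V) ≤ infEdist x (Subtype.val '' U) := by
      apply infEdist_anti
      rintro z ⟨w, hwU, rfl⟩
      refine ⟨w.2, fun ⟨u, huV, hu⟩ => ?_⟩
      have : w ∈ U ∩ V := ⟨hwU, by rwa [Subtype.ext hu] at huV⟩
      rw [hUV] at this; exact this
    exact absurd ((hxU.trans_le h1).trans (hxV.trans_le h2)) (lt_irrefl _)
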